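/- If the dependency graph of a finite ground normal logic program P has no negative cycle, then P has at least one stable model (a 2-valued stable partial model). -/

import Mathlib

/-- Three truth values: false, unknown, true. -/
inductive TV3 | fls | unk | tru
  deriving DecidableEq

namespace TV3

def toFin : TV3 → Fin 3
  | fls => 0 | unk => 1 | tru => 2

/-- The truth order f < u < t. -/
instance : LinearOrder TV3 :=
  LinearOrder.lift' toFin (by intro a b h; cases a <;> cases b <;> simp_all [toFin])

instance : BoundedOrder TV3 where
  top := tru
  bot := fls
  le_top x := by cases x <;> decide
  bot_le x := by cases x <;> decide

/-- Kleene negation. -/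
def neg : TV3 → TV3 | fls => tru | unk => unk | tru => fls

end TV3

def ofBool : Bool → TV3 | true => .tru | false => .fls

/-- The subset order on truth values: f <ₛ u and t <ₛ u. -/
def leS (x y : TV3) : Prop := x = y ∨ y = TV3.unk

section LP

variable {A : Type*} [Fintype A] [DecidableEq A]

/-- Pointwise subset order on 3-valued interpretations. -/
def leSI (I₁ I₂ : A → TV3) : Prop := ∀ a, leS (I₁ a) (I₂ a)

/-- The set of 2-valued interpretations compatible with a 3-valued one. -/
def gamma (I : A → TV3) : Set (A → Bool) :=
  {J | ∀ a, I a ≠ TV3.unk → ofBool (J a) = I a}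

/-- A ground normal rule: head ← pos, ∼neg. -/
structure Rule (A : Type*) where
  head : A
  pos : Finset A
  neg : Finset A
  deriving DecidableEq

/-- A finite ground normal logic program. -/
abbrev Program (A : Type*) [DecidableEq A] := Finset (Rule A)

/-- Immediate consequence operator T_P. -/
def TP (P : Program A) (J : A → Bool) (a : A) : Bool :=
  decide (∃ r ∈ P, r.head = a ∧ (∀ p ∈ r.pos, J p = true) ∧ (∀ q ∈ r.neg, J q = false))

/-- 2-valued value of the body formula of a rule. -/
noncomputable def bodyVal2 (r : Rule A) (s : A → Bool) : Bool :=
  (r.pos.inf s) && !(r.neg.sup s)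

/-- The Boolean network encoding of a program: f_v = ⋁_{head r = v} body-formula(r). -/
noncomputable def encBN (P : Program A) : A → (A → Bool) → Bool :=
  fun v s => P.sup fun r => if r.head = v then bodyVal2 r s else false

/-- 3-valued (Kleene) value of the body formula of a rule. -/
def bodyVal3 (r : Rule A) (I : A → TV3) : TV3 :=
  (r.pos.inf I) ⊓ (r.neg.inf fun q => TV3.neg (I q))

/-- 3-valued evaluation of rhs(a), the disjunction of bodies of rules with head a. -/
def rhs3 (P : Program A) (I : A → TV3) (a : A) : TV3 :=
  P.sup fun r => if r.head = a then bodyVal3 r I else TV3.fls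

/-- Signs of arcs. -/
inductive Sign | pos | neg
  deriving DecidableEq

/-- A signed directed graph on A. -/
abbrev SGraph (A : Type*) := A → A → Sign → Prop

def posArc (P : Program A) (u v : A) : Prop := ∃ r ∈ P, r.head = v ∧ u ∈ r.pos
def negArc (P : Program A) (u v : A) : Prop := ∃ r ∈ P, r.head = v ∧ u ∈ r.neg

/-- Dependency graph of a program. -/
def dg (P : Program A) : SGraph A := fun u v s =>
  match s with
  | Sign.pos => posArc P u v
  | Sign.neg => negArc P u v

/-- Influence graph of a Boolean network. -/
def ig (f : A → (A → Bool) → Bool) : SGraph A := fun u v s =>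
  match s with
  | Sign.pos => ∃ x : A → Bool, f v (Function.update x u false) < f v (Function.update x u true)
  | Sign.neg => ∃ x : A → Bool, f v (Function.update x u true) < f v (Function.update x u false)

/-- A (closed signed) cycle in a signed graph: vertices v₀,…,vₙ with arcs
vᵢ → vᵢ₊₁ (indices mod n+1) carrying the given signs. -/
structure SCycle (G : SGraph A) where
  n : ℕ
  vtx : Fin (n + 1) → A
  sgn : Fin (n + 1) → Sign
  arc : ∀ i, G (vtx i) (vtx (i + 1)) (sgn i)

/-- A cycle is negative if it has an odd number of negative arcs. -/
def SCycle.IsNeg {G : SGraph A} (c : SCycle G) : Prop :=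
  (Finset.univ.filter fun i => c.sgn i = Sign.neg).card % 2 = 1

/-- A cycle is positive if it has an even number of negative arcs. -/
def SCycle.IsPos {G : SGraph A} (c : SCycle G) : Prop :=
  (Finset.univ.filter fun i => c.sgn i = Sign.neg).card % 2 = 0

/-- U is a positive feedback vertex set: it meets every positive cycle. -/
def IsPFVS (G : SGraph A) (U : Finset A) : Prop :=
  ∀ c : SCycle G, c.IsPos → ∃ i, c.vtx i ∈ U

/-- P is tight: its positive dependency graph is acyclic. -/
def Tight (P : Program A) : Prop :=
  IsEmpty (SCycle (fun u v s => s = Sign.pos ∧ posArc P u v))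

/-- Synchronous update of a Boolean network. -/
def syncNext (f : A → (A → Bool) → Bool) (x : A → Bool) : A → Bool := fun v => f v x

/-- Fully asynchronous transition. -/
def asyncStep (f : A → (A → Bool) → Bool) (x y : A → Bool) : Prop :=
  ∃ v, f v x ≠ x v ∧ y = Function.update x v (f v x)

/-- Nonempty trap set of the asynchronous state transition graph. -/
def IsTrapSet (f : A → (A → Bool) → Bool) (S : Set (A → Bool)) : Prop :=
  S.Nonempty ∧ ∀ x ∈ S, ∀ y, asyncStep f x y → y ∈ S

/-- Attractor: subset-minimal nonempty trap set. -/
def IsAttractor (f : A → (A → Bool) → Bool) (S : Set (A → Bool)) : Prop :=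
  IsTrapSet f S ∧ ∀ T, IsTrapSet f T → T ⊆ S → T = S

def IsFixedPoint (f : A → (A → Bool) → Bool) (x : A → Bool) : Prop :=
  syncNext f x = x

/-- Trap space of a BN under synchronous update. -/
def IsSyncTrapSpace (f : A → (A → Bool) → Bool) (m : A → TV3) : Prop :=
  ∀ s ∈ gamma m, syncNext f s ∈ gamma m

/-- Trap space of a BN under asynchronous update. -/
def IsAsyncTrapSpace (f : A → (A → Bool) → Bool) (m : A → TV3) : Prop :=
  ∀ s ∈ gamma m, ∀ y, asyncStep f s y → y ∈ gamma m

/-- Supported trap space: γ(I) is closed under T_P. -/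
def IsSuppTrapSpace (P : Program A) (I : A → TV3) : Prop :=
  ∀ J ∈ gamma I, TP P J ∈ gamma I

/-- Supported partial model: 3-valued model of Clark's completion. -/
def IsSuppPartialModel (P : Program A) (I : A → TV3) : Prop :=
  ∀ a, I a = rhs3 P I a

/-- The 3-valued one-step operator of the Przymusinski reduct P^I applied to K:
negative literals are evaluated under I (Kleene negation), positive ones under K. -/
def Phi (P : Program A) (I K : A → TV3) (a : A) : TV3 :=
  P.sup fun r =>
    if r.head = a then (r.pos.inf K) ⊓ (r.neg.inf fun q => TV3.neg (I q)) else TV3.fls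

/-- Stable partial model: I is the ≤ₜ-least 3-valued model of the reduct P^I. -/
def IsStablePartial (P : Program A) (I : A → TV3) : Prop :=
  (∀ a, Phi P I I a ≤ I a) ∧
    ∀ K : A → TV3, (∀ a, Phi P I K a ≤ K a) → ∀ a, I a ≤ K a

/-- Regular model: ≤ₛ-minimal stable partial model. -/
def IsRegularModel (P : Program A) (I : A → TV3) : Prop :=
  IsStablePartial P I ∧ ∀ I', IsStablePartial P I' → leSI I' I → I' = I

def Is2Valued (I : A → TV3) : Prop := ∀ a, I a ≠ TV3.unk

/-- The one-step operator of the Gelfond–Lifschitz reduct P^J applied to K. -/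
noncomputable def PhiB (P : Program A) (J K : A → Bool) (a : A) : Bool :=
  P.sup fun r =>
    if r.head = a then ((r.pos.inf K) && !(r.neg.sup J)) else false

/-- Stable model: J is the least model of the Gelfond–Lifschitz reduct P^J. -/
def IsStableModel (P : Program A) (J : A → Bool) : Prop :=
  (∀ a, PhiB P J J a ≤ J a) ∧
    ∀ K : A → Bool, (∀ a, PhiB P J K a ≤ K a) → ∀ a, J a ≤ K a

/-- Every cycle of dg(P) contains no negative arc. -/
def LocallyStratified (P : Program A) : Prop :=
  ∀ c : SCycle (dg P), ∀ i, c.sgn i ≠ Sign.neg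

def NoNegCycle (G : SGraph A) : Prop := ∀ c : SCycle G, ¬ c.IsNeg
def NoPosCycle (G : SGraph A) : Prop := ∀ c : SCycle G, ¬ c.IsPos

end LP
section Proof14
set_option linter.unusedSectionVars false
set_option linter.unreachableTactic false
set_option linter.unusedTactic false

variable {A : Type*} [Fintype A] [DecidableEq A]

private lemma band_le_band {x x' y y' : Bool} (h1 : x ≤ x') (h2 : y ≤ y') :
    (x && y) ≤ (x' && y') := by
  cases x <;> cases x' <;> cases y <;> cases y' <;> simp_all

private lemma bnot_le_bnot {x y : Bool} (h : y ≤ x) : (!x) ≤ (!y) := by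
  cases x <;> cases y <;> simp_all

noncomputable def PhiBHom (P : Program A) (J : A → Bool) : (A → Bool) →o (A → Bool) :=
  ⟨fun K => PhiB P J K, by
    intro K K' hK a
    refine Finset.sup_mono_fun ?_
    intro r _
    dsimp only
    split
    · exact band_le_band (Finset.inf_mono_fun fun p _ => hK p) le_rfl
    · exact le_rfl⟩

noncomputable def Theta (P : Program A) (J : A → Bool) : A → Bool :=
  OrderHom.lfp (PhiBHom P J)

lemma theta_fixed (P : Program A) (J : A → Bool) :
    PhiB P J (Theta P J) = Theta P J :=
  OrderHom.map_lfp (PhiBHom P J)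

lemma theta_le {P : Program A} {J K : A → Bool} (h : ∀ a, PhiB P J K a ≤ K a) :
    Theta P J ≤ K :=
  OrderHom.lfp_le _ (fun a => h a)

lemma stable_of_theta_eq {P : Program A} {J : A → Bool} (h : Theta P J = J) :
    IsStableModel P J := by
  constructor
  · intro a
    have h2 := theta_fixed P J
    rw [h] at h2
    exact le_of_eq (congrFun h2 a)
  · intro K hK a
    rw [← h]
    exact theta_le hK a

/-! ### Two-block construction -/

def flipb (σ : A → Bool) (J : A → Bool) : A → Bool := fun a => if σ a then J a else !(J a)

lemma flipb_flipb (σ J : A → Bool) : flipb σ (flipb σ J) = J := by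
  funext a; unfold flipb; by_cases h : σ a <;> simp [h]

lemma flipb_pos {σ f: A → Bool} {a : A} (h : σ a = true) : flipb σ f a = f a := if_pos h

lemma flipb_neg {σ f : A → Bool} {a : A} (h : σ a = false) : flipb σ f a = !f a := by
  unfold flipb; rw [if_neg (by simp [h])]

lemma flipb_le {σ f g : A → Bool} {a : A}
    (h1 : σ a = true → f a ≤ g a) (h2 : σ a = false → g a ≤ f a) :
    flipb σ f a ≤ flipb σ g a := by
  by_cases h : σ a = true
  · rw [flipb_pos h, flipb_pos h]; exact h1 h
  · have h' : σ a = false := by simpa using h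
    rw [flipb_neg h', flipb_neg h']; exact bnot_le_bnot (h2 h')

lemma theta_mono_twisted (Q : Program A) (σ : A → Bool)
    (h : ∀ r ∈ Q, (∀ p ∈ r.pos, σ p = σ r.head) ∧ (∀ q ∈ r.neg, σ q ≠ σ r.head))
    (J J' : A → Bool)
    (hT : ∀ a, σ a = true → J a ≤ J' a) (hF : ∀ a, σ a = false → J' a ≤ J a) :
    (∀ a, σ a = true → Theta Q J a ≤ Theta Q J' a) ∧
      (∀ a, σ a = false → Theta Q J' a ≤ Theta Q J a) := by
  set L : A → Bool := Theta Q J with hL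
  set L' : A → Bool := Theta Q J' with hL'
  set Cc : A → Bool := fun a => if σ a = true then L' a else L a with hCc
  have hC1 : L ≤ Cc := by
    refine theta_le ?_
    intro a
    by_cases hσ : σ a = true
    · have hCa : Cc a = L' a := if_pos hσ
      rw [hCa]
      refine Finset.sup_le ?_
      intro r hr
      by_cases hhead : r.head = a
      · rw [if_pos hhead]
        have hterm : (r.pos.inf Cc && !r.neg.sup J) ≤ (r.pos.inf L' && !r.neg.sup J') := by
          refine band_le_band ?_ ?_
          · refine le_of_eq (Finset.inf_congr rfl ?_)
            intro p hp
            have hp2 : σ p = true := by rw [(h r hr).1 p hp, hhead, hσ]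
            simp only [hCc, if_pos hp2]
          · refine bnot_le_bnot (Finset.sup_mono_fun ?_)
            intro q hq
            have hq2 : σ q = false := by
              have := (h r hr).2 q hq
              rw [hhead, hσ] at this
              simpa using this
            exact hF q hq2
        refine hterm.trans ?_
        have hle := Finset.le_sup
          (f := fun r : Rule A => if r.head = a then ((r.pos.inf L') && !(r.neg.sup J')) else false) hr
        simp only [if_pos hhead] at hle
        exact hle.trans (le_of_eq (congrFun (theta_fixed Q J') a))
      · rw [if_neg hhead]; exact Bool.false_le _
    · have hCa : Cc a = L a := if_neg hσ
      rw [hCa]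
      have hcong : PhiB Q J Cc a = PhiB Q J L a := by
        refine Finset.sup_congr rfl ?_
        intro r hr
        by_cases hhead : r.head = a
        · rw [if_pos hhead, if_pos hhead]
          congr 1
          refine Finset.inf_congr rfl ?_
          intro p hp
          have hp2 : σ p = false := by rw [(h r hr).1 p hp, hhead]; simpa using hσ
          simp only [hCc, hp2]
          simp
        · rw [if_neg hhead, if_neg hhead]
      exact le_of_eq (hcong.trans (congrFun (theta_fixed Q J) a))
  have hC2 : L' ≤ Cc := by
    refine theta_le ?_
    intro a
    by_cases hσ : σ a = true
    · have hCa : Cc a = L' a := if_pos hσ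
      rw [hCa]
      have hcong : PhiB Q J' Cc a = PhiB Q J' L' a := by
        refine Finset.sup_congr rfl ?_
        intro r hr
        by_cases hhead : r.head = a
        · rw [if_pos hhead, if_pos hhead]
          congr 1
          refine Finset.inf_congr rfl ?_
          intro p hp
          have hp2 : σ p = true := by rw [(h r hr).1 p hp, hhead, hσ]
          simp only [hCc, if_pos hp2]
        · rw [if_neg hhead, if_neg hhead]
      exact le_of_eq (hcong.trans (congrFun (theta_fixed Q J') a))
    · have hCa : Cc a = L a := if_neg hσ
      rw [hCa]
      refine Finset.sup_le ?_
      intro r hr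
      by_cases hhead : r.head = a
      · rw [if_pos hhead]
        have hterm : (r.pos.inf Cc && !r.neg.sup J') ≤ (r.pos.inf L && !r.neg.sup J) := by
          refine band_le_band ?_ ?_
          · refine le_of_eq (Finset.inf_congr rfl ?_)
            intro p hp
            have hp2 : σ p = false := by rw [(h r hr).1 p hp, hhead]; simpa using hσ
            simp only [hCc, hp2]
            simp
          · refine bnot_le_bnot (Finset.sup_mono_fun ?_)
            intro q hq
            have hq2 : σ q = true := by
              have := (h r hr).2 q hq
              rw [hhead] at this
              simp only [Bool.not_eq_true] at hσ
              rw [hσ] at this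
              simpa using this
            exact hT q hq2
        refine hterm.trans ?_
        have hle := Finset.le_sup
          (f := fun r : Rule A => if r.head = a then ((r.pos.inf L) && !(r.neg.sup J)) else false) hr
        simp only [if_pos hhead] at hle
        exact hle.trans (le_of_eq (congrFun (theta_fixed Q J) a))
      · rw [if_neg hhead]; exact Bool.false_le _
  constructor
  · intro a ha
    have := hC1 a
    simpa [hCc, ha] using this
  · intro a ha
    have := hC2 a
    simpa [hCc, ha] using this

lemma twoBlock (Q : Program A) (σ : A → Bool)
    (h : ∀ r ∈ Q, (∀ p ∈ r.pos, σ p = σ r.head) ∧ (∀ q ∈ r.neg, σ q ≠ σ r.head)) :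
    ∃ J, IsStableModel Q J := by
  have hmono : Monotone (fun X : A → Bool => flipb σ (Theta Q (flipb σ X))) := by
    intro X X' hXX'
    have hT : ∀ a, σ a = true → flipb σ X a ≤ flipb σ X' a := by
      intro a ha; rw [flipb_pos ha, flipb_pos ha]; exact hXX' a
    have hF : ∀ a, σ a = false → flipb σ X' a ≤ flipb σ X a := by
      intro a ha; rw [flipb_neg ha, flipb_neg ha]
      exact bnot_le_bnot (hXX' a)
    obtain ⟨k1, k2⟩ := theta_mono_twisted Q σ h (flipb σ X) (flipb σ X') hT hF
    intro a
    exact flipb_le (fun ha => k1 a ha) (fun ha => k2 a ha)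
  set Th : (A → Bool) →o (A → Bool) := ⟨_, hmono⟩ with hTh
  set X : A → Bool := OrderHom.lfp Th with hX
  have hfix : Th X = X := OrderHom.map_lfp Th
  refine ⟨flipb σ X, stable_of_theta_eq ?_⟩
  have : flipb σ (Theta Q (flipb σ X)) = X := hfix
  calc Theta Q (flipb σ X) = flipb σ (flipb σ (Theta Q (flipb σ X))) := (flipb_flipb _ _).symm
    _ = flipb σ X := by rw [this]

/-! ### Walks, parities, SCCs -/

inductive PWalk (P : Program A) : A → A → List (A × Sign) → Prop
  | nil (a : A) : PWalk P a a []
  | cons {a b c : A} {s : Sign} {l : List (A × Sign)} :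
      dg P a b s → PWalk P b c l → PWalk P a c ((b, s) :: l)

def npar (l : List (A × Sign)) : ℕ := l.countP (fun x => decide (x.2 = Sign.neg))

lemma npar_append (l l' : List (A × Sign)) : npar (l ++ l') = npar l + npar l' :=
  List.countP_append

lemma pwalk_append {P : Program A} {a b c : A} {l l' : List (A × Sign)}
    (h : PWalk P a b l) : PWalk P b c l' → PWalk P a c (l ++ l') := by
  induction h with
  | nil => exact fun h' => h'
  | cons harc _ ih => exact fun h' => .cons harc (ih h')

lemma pwalk_step {P : Program A} {a c : A} {l : List (A × Sign)} (h : PWalk P a c l) :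
    ∀ i (hi : i < l.length),
      dg P ((a :: l.map Prod.fst)[i]'(by simp; omega))
           ((l.map Prod.fst)[i]'(by simpa using hi))
           ((l[i]'hi).2) := by
  induction h with
  | nil => intro i hi; simp at hi
  | @cons a b c s tl harc ht ih =>
    intro i hi
    match i with
    | 0 => simpa using harc
    | Nat.succ j =>
      have hj : j < tl.length := by simpa using hi
      simpa using ih j hj

lemma pwalk_last' {P : Program A} {a c : A} {l : List (A × Sign)}
    (h : PWalk P a c l) : ∀ i (hi : i < l.length), i = l.length - 1 → (l[i]'hi).1 = c := by
  induction h with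
  | nil => intro i hi; simp at hi
  | @cons a b c s tl harc ht ih =>
    intro i hi heq
    have heq' : i = tl.length := by simpa using heq
    subst heq'
    rcases tl with _ | ⟨x, tl2⟩
    · cases ht; simp
    · have := ih (tl2.length) (by simp) (by simp)
      simpa using this

lemma countP_eq_card_filter' {α : Type*} (q : α → Bool) :
    ∀ (l : List α) (n : ℕ) (hn : l.length = n),
      l.countP q = (Finset.univ.filter
        (fun i : Fin n => q (l[(i : ℕ)]'(hn ▸ i.isLt)) = true)).card := by
  intro l
  induction l with
  | nil =>
    intro n hn
    obtain rfl : n = 0 := by simpa using hn.symm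
    simp
  | cons a l ih =>
    intro n hn
    obtain rfl : n = l.length + 1 := by simpa using hn.symm
    rw [List.countP_cons, ih l.length rfl, Finset.card_filter, Finset.card_filter,
      Fin.sum_univ_succ, add_comm]
    congr 1 <;> simp [Fin.val_succ]

lemma no_odd_closed {P : Program A} (hnc : NoNegCycle (dg P)) :
    ∀ (v : A) (l : List (A × Sign)), PWalk P v v l → npar l % 2 ≠ 1 := by
  intro v l hw hodd
  rcases l with _ | ⟨⟨b, s⟩, tl⟩
  · simp [npar] at hodd
  · set L : List (A × Sign) := (b, s) :: tl with hLdef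
    set n := tl.length with hn
    have hlen : L.length = n + 1 := rfl
    have hNlt : ∀ i : Fin (n + 1), (i : ℕ) < L.length := fun i => by
      rw [hlen]; exact i.isLt
    have hMlt : ∀ i : Fin (n + 1), (i : ℕ) < (L.map Prod.fst).length := fun i => by
      simpa using hNlt i
    have hVlt : ∀ j : ℕ, j < n + 2 → j < (v :: L.map Prod.fst).length := fun j hj => by
      simp [hlen]; omega
    have hstep := pwalk_step hw
    set vtx : Fin (n + 1) → A :=
      fun i => (v :: L.map Prod.fst)[(i : ℕ)]'(hVlt _ (by omega)) with hvtx
    set sg : Fin (n + 1) → Sign := fun i => (L[(i : ℕ)]'(hNlt i)).2 with hsg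
    have harc : ∀ i : Fin (n + 1), dg P (vtx i) (vtx (i + 1)) (sg i) := by
      intro i
      have hs := hstep (i : ℕ) (hNlt i)
      by_cases hi : i = Fin.last n
      · have hval : ((i + 1 : Fin (n + 1)) : ℕ) = 0 := by
          rw [Fin.val_add_one, if_pos hi]
        have h0 : vtx (i + 1) = v := by rw [hvtx]; simp [hval]
        have hidx : (i : ℕ) = n := by rw [hi]; rfl
        have hgl : (L.map Prod.fst)[(i : ℕ)]'(hMlt i) = v := by
          have hmap : (L.map Prod.fst)[(i : ℕ)]'(hMlt i) = (L[(i : ℕ)]'(hNlt i)).1 := by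
            simp
          rw [hmap]
          exact pwalk_last' hw (i : ℕ) (hNlt i) (by rw [hidx, hlen]; omega)
        rw [h0]
        rw [hgl] at hs
        exact hs
      · have hval : ((i + 1 : Fin (n + 1)) : ℕ) = (i : ℕ) + 1 := by
          rw [Fin.val_add_one, if_neg hi]
        have h1 : vtx (i + 1) = (L.map Prod.fst)[(i : ℕ)]'(hMlt i) := by
          rw [hvtx]; simp [hval]
        rw [h1]
        exact hs
    have hcyc := hnc ⟨n, vtx, sg, harc⟩
    apply hcyc
    unfold SCycle.IsNeg
    simp only
    have hcnt := countP_eq_card_filter' (fun x : A × Sign => decide (x.2 = Sign.neg)) L (n + 1) hlen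
    have : (Finset.univ.filter fun i : Fin (n + 1) => sg i = Sign.neg).card
        = npar L := by
      rw [npar, hcnt]
      apply Finset.card_nbij id (by intro x hx; simpa [hsg] using hx)
        (by intro x hx y hy h; exact h)
      intro x hx
      refine ⟨x, ?_, rfl⟩
      simpa [hsg] using hx
    rw [this]
    exact hodd

/-! ### Reachability, levels, parity labels -/

def ReachP (P : Program A) (a b : A) : Prop := ∃ l, PWalk P a b l

lemma reachP_refl (P : Program A) (a : A) : ReachP P a a := ⟨[], .nil a⟩

lemma reachP_trans {P : Program A} {a b c : A} (h : ReachP P a b) (h' : ReachP P b c) :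
    ReachP P a c := by
  obtain ⟨l, hl⟩ := h; obtain ⟨l', hl'⟩ := h'
  exact ⟨l ++ l', pwalk_append hl hl'⟩

lemma reachP_arc {P : Program A} {u v : A} {s : Sign} (h : dg P u v s) : ReachP P u v :=
  ⟨[(v, s)], .cons h (.nil v)⟩

noncomputable def kf (P : Program A) (v : A) : ℕ := {u | ReachP P u v}.ncard

lemma kf_mono {P : Program A} {u v : A} {s : Sign} (h : dg P u v s) : kf P u ≤ kf P v :=
  Set.ncard_le_ncard (fun _ hw => reachP_trans hw (reachP_arc h)) (Set.toFinite _)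

lemma kf_back {P : Program A} {u v : A} {s : Sign} (h : dg P u v s)
    (heq : kf P u = kf P v) : ReachP P v u := by
  have hsub : {w | ReachP P w u} ⊆ {w | ReachP P w v} :=
    fun w hw => reachP_trans hw (reachP_arc h)
  have hset := Set.eq_of_subset_of_ncard_le hsub (le_of_eq heq.symm) (Set.toFinite _)
  have hv : v ∈ {w | ReachP P w v} := reachP_refl P v
  rw [← hset] at hv
  exact hv

def sccSetoid (P : Program A) : Setoid A :=
  ⟨fun a b => ReachP P a b ∧ ReachP P b a,
   ⟨fun a => ⟨reachP_refl P a, reachP_refl P a⟩,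
    fun h => ⟨h.2, h.1⟩,
    fun h h' => ⟨reachP_trans h.1 h'.1, reachP_trans h'.2 h.2⟩⟩⟩

noncomputable def sccRep (P : Program A) (v : A) : A :=
  @Quotient.out A (sccSetoid P) (@Quotient.mk A (sccSetoid P) v)

lemma sccRep_rel (P : Program A) (v : A) :
    ReachP P (sccRep P v) v ∧ ReachP P v (sccRep P v) :=
  @Quotient.mk_out A (sccSetoid P) v

lemma sccRep_eq {P : Program A} {u v : A} (h : ReachP P u v ∧ ReachP P v u) :
    sccRep P u = sccRep P v := by
  unfold sccRep
  congr 1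
  exact Quotient.sound h

open Classical in
noncomputable def sigf (P : Program A) (v : A) : Bool :=
  decide (∃ l, PWalk P (sccRep P v) v l ∧ npar l % 2 = 1)

lemma par_unique {P : Program A} (hnc : NoNegCycle (dg P)) {b u : A}
    {l1 l2 l3 : List (A × Sign)} (h1 : PWalk P b u l1) (h2 : PWalk P b u l2)
    (h3 : PWalk P u b l3) : npar l1 % 2 = npar l2 % 2 := by
  by_contra hne
  have e1 := no_odd_closed hnc b _ (pwalk_append h1 h3)
  have e2 := no_odd_closed hnc b _ (pwalk_append h2 h3)
  rw [npar_append] at e1 e2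
  omega

lemma sigf_eq {P : Program A} (hnc : NoNegCycle (dg P)) {u : A} {l : List (A × Sign)}
    (hbu : PWalk P (sccRep P u) u l) (hub : ReachP P u (sccRep P u)) :
    sigf P u = decide (npar l % 2 = 1) := by
  classical
  unfold sigf
  obtain ⟨l3, hl3⟩ := hub
  refine decide_eq_decide.mpr ?_
  constructor
  · rintro ⟨l', hl', hodd⟩
    rw [← par_unique hnc hl' hbu hl3]
    exact hodd
  · intro hodd
    exact ⟨l, hbu, hodd⟩

lemma sigf_step {P : Program A} (hnc : NoNegCycle (dg P)) {u v : A} {s : Sign}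
    (harc : dg P u v s) (hk : kf P u = kf P v) :
    sigf P v = ((sigf P u).xor (decide (s = Sign.neg))) := by
  have hvu : ReachP P v u := kf_back harc hk
  have huv : ReachP P u v := reachP_arc harc
  have hrep : sccRep P u = sccRep P v := sccRep_eq ⟨huv, hvu⟩
  obtain ⟨lbu, hlbu⟩ := (sccRep_rel P u).1
  have hub : ReachP P u (sccRep P u) := (sccRep_rel P u).2
  have hsu := sigf_eq hnc hlbu hub
  have hbv : PWalk P (sccRep P v) v (lbu ++ [(v, s)]) := by
    rw [← hrep]
    exact pwalk_append hlbu (.cons harc (.nil v))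
  have hvb : ReachP P v (sccRep P v) := by
    rw [← hrep]; exact reachP_trans hvu hub
  have hsv := sigf_eq hnc hbv hvb
  rw [hsu, hsv, npar_append]
  have hone : npar [(v, s)] = if s = Sign.neg then 1 else 0 := by
    by_cases hs : s = Sign.neg <;> simp [npar, hs]
  rw [hone]
  by_cases hs : s = Sign.neg
  · rw [if_pos hs]
    rcases Nat.mod_two_eq_zero_or_one (npar lbu) with h0 | h0
    · have h1 : (npar lbu + 1) % 2 = 1 := by omega
      simp [hs, h0, h1]
    · have h1 : (npar lbu + 1) % 2 = 0 := by omega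
      simp [hs, h0, h1]
  · rw [if_neg hs]
    simp [hs]

lemma sigf_pos {P : Program A} (hnc : NoNegCycle (dg P)) {u v : A}
    (harc : dg P u v Sign.pos) (hk : kf P u = kf P v) : sigf P u = sigf P v := by
  have h := sigf_step hnc harc hk
  simp at h
  exact h.symm

lemma sigf_neg {P : Program A} (hnc : NoNegCycle (dg P)) {u v : A}
    (harc : dg P u v Sign.neg) (hk : kf P u = kf P v) : sigf P u ≠ sigf P v := by
  have h := sigf_step hnc harc hk
  simp at h
  rw [h]
  cases sigf P u <;> simp

/-! ### Support, splitting, and the main recursion -/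

def suppP (Q : Program A) : Finset A := Q.sup fun r => insert r.head (r.pos ∪ r.neg)

lemma head_mem_suppP {Q : Program A} {r : Rule A} (hr : r ∈ Q) : r.head ∈ suppP Q :=
  Finset.mem_sup.mpr ⟨r, hr, Finset.mem_insert_self _ _⟩

lemma pos_mem_suppP {Q : Program A} {r : Rule A} (hr : r ∈ Q) {p : A} (hp : p ∈ r.pos) :
    p ∈ suppP Q :=
  Finset.mem_sup.mpr ⟨r, hr, Finset.mem_insert_of_mem (Finset.mem_union_left _ hp)⟩

lemma neg_mem_suppP {Q : Program A} {r : Rule A} (hr : r ∈ Q) {q : A} (hq : q ∈ r.neg) :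
    q ∈ suppP Q :=
  Finset.mem_sup.mpr ⟨r, hr, Finset.mem_insert_of_mem (Finset.mem_union_right _ hq)⟩

lemma stable_of_supp_empty {Q : Program A} (h : suppP Q = ∅) : ∃ J, IsStableModel Q J := by
  have hQ : Q = ∅ := by
    rcases Finset.eq_empty_or_nonempty Q with h' | ⟨r, hr⟩
    · exact h'
    · exact absurd (head_mem_suppP hr) (by simp [h])
  subst hQ
  refine ⟨fun _ => false, fun a => ?_, fun K _ a => Bool.false_le _⟩
  simp [PhiB]

private lemma rh (h : A) (ps ns : Finset A) : (Rule.mk h ps ns).head = h := rfl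
private lemma rp (h : A) (ps ns : Finset A) : (Rule.mk h ps ns).pos = ps := rfl
private lemma rn (h : A) (ps ns : Finset A) : (Rule.mk h ps ns).neg = ns := rfl

private lemma inf_split (C s : Finset A) (f : A → Bool) :
    s.inf f = ((s.filter (· ∈ C)).inf f && (s.filter (· ∉ C)).inf f) := by
  conv_lhs => rw [← Finset.filter_union_filter_not_eq (p := (· ∈ C)) s]
  exact Finset.inf_union

private lemma sup_split (C s : Finset A) (f : A → Bool) :
    s.sup f = ((s.filter (· ∈ C)).sup f || (s.filter (· ∉ C)).sup f) := by
  conv_lhs => rw [← Finset.filter_union_filter_not_eq (p := (· ∈ C)) s]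
  exact Finset.sup_union

lemma buildStable (P : Program A) (hnc : NoNegCycle (dg P)) :
    ∀ (n : ℕ) (Q : Program A), (suppP Q).card ≤ n →
      (∀ u v s, dg Q u v s → dg P u v s) → ∃ J, IsStableModel Q J := by
  intro n
  induction n with
  | zero =>
    intro Q hcard _
    exact stable_of_supp_empty (Finset.card_eq_zero.mp (Nat.le_zero.mp hcard))
  | succ n ih =>
    intro Q hcard hsub
    rcases Finset.eq_empty_or_nonempty (suppP Q) with hS | hS
    · exact stable_of_supp_empty hS
    classical
    set S := suppP Q with hSdef
    have hSim : (S.image (kf P)).Nonempty := hS.image _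
    set m := (S.image (kf P)).min' hSim with hm
    set C := S.filter (fun v => kf P v = m) with hCdef
    have hCsub : C ⊆ S := Finset.filter_subset _ _
    have hmin : ∀ v ∈ S, m ≤ kf P v := fun v hv =>
      Finset.min'_le _ _ (Finset.mem_image_of_mem _ hv)
    have hCne : C.Nonempty := by
      obtain ⟨x, hx, hxe⟩ := Finset.mem_image.mp ((S.image (kf P)).min'_mem hSim)
      exact ⟨x, Finset.mem_filter.mpr ⟨hx, hxe⟩⟩
    have hmemC : ∀ v, v ∈ C ↔ v ∈ S ∧ kf P v = m := fun v => Finset.mem_filter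
    have hbodyC : ∀ r ∈ Q, r.head ∈ C → (∀ p ∈ r.pos, p ∈ C) ∧ (∀ q ∈ r.neg, q ∈ C) := by
      intro r hr hrh
      have hkh : kf P r.head = m := ((hmemC _).mp hrh).2
      constructor
      · intro p hp
        have harc : dg Q p r.head Sign.pos := ⟨r, hr, rfl, hp⟩
        have hk1 : kf P p ≤ m := le_trans (kf_mono (hsub _ _ _ harc)) (le_of_eq hkh)
        have hpS : p ∈ S := pos_mem_suppP hr hp
        exact (hmemC _).mpr ⟨hpS, le_antisymm hk1 (hmin _ hpS)⟩
      · intro q hq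
        have harc : dg Q q r.head Sign.neg := ⟨r, hr, rfl, hq⟩
        have hk1 : kf P q ≤ m := le_trans (kf_mono (hsub _ _ _ harc)) (le_of_eq hkh)
        have hqS : q ∈ S := neg_mem_suppP hr hq
        exact (hmemC _).mpr ⟨hqS, le_antisymm hk1 (hmin _ hqS)⟩
    set QC := Q.filter (fun r => r.head ∈ C) with hQCdef
    have hQCcond : ∀ r ∈ QC, (∀ p ∈ r.pos, sigf P p = sigf P r.head) ∧
        (∀ q ∈ r.neg, sigf P q ≠ sigf P r.head) := by
      intro r hrQC
      have hrmem := hrQC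
      rw [hQCdef] at hrmem
      obtain ⟨hrQ, hrh⟩ := Finset.mem_filter.mp hrmem
      obtain ⟨hposC, hnegC⟩ := hbodyC r hrQ hrh
      have hkh : kf P r.head = m := ((hmemC _).mp hrh).2
      constructor
      · intro p hp
        have hkp : kf P p = m := ((hmemC _).mp (hposC p hp)).2
        exact sigf_pos hnc (hsub _ _ _ (⟨r, hrQ, rfl, hp⟩ : dg Q p r.head Sign.pos))
          (by rw [hkp, hkh])
      · intro q hq
        have hkq : kf P q = m := ((hmemC _).mp (hnegC q hq)).2
        exact sigf_neg hnc (hsub _ _ _ (⟨r, hrQ, rfl, hq⟩ : dg Q q r.head Sign.neg))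
          (by rw [hkq, hkh])
    obtain ⟨J₁, hJ₁⟩ := twoBlock QC (sigf P) hQCcond
    set Q' : Program A := (Q.filter (fun r => r.head ∉ C ∧
        (∀ p ∈ r.pos, p ∈ C → J₁ p = true) ∧ (∀ q ∈ r.neg, q ∈ C → J₁ q = false))).image
      (fun r => ⟨r.head, r.pos.filter (· ∉ C), r.neg.filter (· ∉ C)⟩) with hQ'def
    have hsupp' : suppP Q' ⊆ S \ C := by
      intro x hx
      rw [Finset.mem_sdiff, hSdef]
      obtain ⟨r', hr', hmem⟩ := Finset.mem_sup.mp hx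
      rw [hQ'def] at hr'
      obtain ⟨r, hrf, rfl⟩ := Finset.mem_image.mp hr'
      obtain ⟨hrQ, hrh, _, _⟩ := Finset.mem_filter.mp hrf
      rw [rh, rp, rn] at hmem
      rcases Finset.mem_insert.mp hmem with rfl | hbody
      · exact ⟨head_mem_suppP hrQ, hrh⟩
      · rcases Finset.mem_union.mp hbody with hp | hq
        · obtain ⟨hp1, hp2⟩ := Finset.mem_filter.mp hp
          exact ⟨pos_mem_suppP hrQ hp1, hp2⟩
        · obtain ⟨hq1, hq2⟩ := Finset.mem_filter.mp hq
          exact ⟨neg_mem_suppP hrQ hq1, hq2⟩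
    have hcard' : (suppP Q').card ≤ n := by
      have h1 := Finset.card_le_card hsupp'
      have h2 := Finset.card_lt_card (Finset.sdiff_ssubset hCsub hCne)
      omega
    have hsub' : ∀ u v s, dg Q' u v s → dg P u v s := by
      intro u v s hd
      refine hsub u v s ?_
      cases s
      · obtain ⟨r', hr', hh, hu⟩ := hd
        rw [hQ'def] at hr'
        obtain ⟨r, hrf, rfl⟩ := Finset.mem_image.mp hr'
        have hu' : u ∈ r.pos.filter (· ∉ C) := hu
        exact ⟨r, (Finset.mem_filter.mp hrf).1, hh, (Finset.mem_filter.mp hu').1⟩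
      · obtain ⟨r', hr', hh, hu⟩ := hd
        rw [hQ'def] at hr'
        obtain ⟨r, hrf, rfl⟩ := Finset.mem_image.mp hr'
        have hu' : u ∈ r.neg.filter (· ∉ C) := hu
        exact ⟨r, (Finset.mem_filter.mp hrf).1, hh, (Finset.mem_filter.mp hu').1⟩
    obtain ⟨J₂, hJ₂⟩ := ih Q' hcard' hsub'
    set J : A → Bool := fun v => if v ∈ C then J₁ v else J₂ v with hJdef
    have hJC : ∀ v ∈ C, J v = J₁ v := by
      intro v hv; simp only [hJdef]; rw [if_pos hv]
    have hJnC : ∀ v, v ∉ C → J v = J₂ v := by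
      intro v hv; simp only [hJdef]; rw [if_neg hv]
    refine ⟨J, ?_, ?_⟩
    · intro a
      refine Finset.sup_le ?_
      intro r hr
      by_cases hhead : r.head = a
      case neg => rw [if_neg hhead]; exact Bool.false_le _
      rw [if_pos hhead]
      by_cases haC : a ∈ C
      · have hrh : r.head ∈ C := by rw [hhead]; exact haC
        have hrQC : r ∈ QC := by rw [hQCdef]; exact Finset.mem_filter.mpr ⟨hr, hrh⟩
        obtain ⟨hposC, hnegC⟩ := hbodyC r hr hrh
        have hterm : (r.pos.inf J && !r.neg.sup J) = (r.pos.inf J₁ && !r.neg.sup J₁) := by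
          rw [Finset.inf_congr rfl (fun p hp => hJC p (hposC p hp)),
            Finset.sup_congr rfl (fun q hq => hJC q (hnegC q hq))]
        rw [hterm]
        have hle := Finset.le_sup (s := QC) (f := fun r : Rule A =>
          if r.head = a then ((r.pos.inf J₁) && !(r.neg.sup J₁)) else false) hrQC
        simp only [if_pos hhead] at hle
        refine hle.trans ((hJ₁.1 a).trans ?_)
        exact le_of_eq (hJC a haC).symm
      · have hrh : r.head ∉ C := by rw [hhead]; exact haC
        by_cases hsurv : (∀ p ∈ r.pos, p ∈ C → J₁ p = true) ∧
            (∀ q ∈ r.neg, q ∈ C → J₁ q = false)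
        · have hpos1 : (r.pos.filter (· ∈ C)).inf J = true := by
            refine (Finset.inf_eq_top_iff _ _).mpr ?_
            intro p hp
            obtain ⟨hp1, hp2⟩ := Finset.mem_filter.mp hp
            rw [hJC p hp2]; exact hsurv.1 p hp1 hp2
          have hneg1 : (r.neg.filter (· ∈ C)).sup J = false := by
            refine (Finset.sup_eq_bot_iff _ _).mpr ?_
            intro q hq
            obtain ⟨hq1, hq2⟩ := Finset.mem_filter.mp hq
            rw [hJC q hq2]; exact hsurv.2 q hq1 hq2
          have hpos2 : r.pos.inf J = (r.pos.filter (· ∉ C)).inf J₂ := by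
            rw [inf_split C r.pos J, hpos1, Bool.true_and]
            exact Finset.inf_congr rfl (fun p hp => hJnC p (Finset.mem_filter.mp hp).2)
          have hneg2 : r.neg.sup J = (r.neg.filter (· ∉ C)).sup J₂ := by
            rw [sup_split C r.neg J, hneg1, Bool.false_or]
            exact Finset.sup_congr rfl (fun q hq => hJnC q (Finset.mem_filter.mp hq).2)
          have hredmem : (⟨r.head, r.pos.filter (· ∉ C), r.neg.filter (· ∉ C)⟩ : Rule A) ∈ Q' := by
            rw [hQ'def]
            exact Finset.mem_image_of_mem _ (Finset.mem_filter.mpr ⟨hr, hrh, hsurv.1, hsurv.2⟩)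
          have hle : ((r.pos.filter (· ∉ C)).inf J₂ && !((r.neg.filter (· ∉ C)).sup J₂))
              ≤ PhiB Q' J₂ J₂ a := by
            have h0 := Finset.le_sup (s := Q') (f := fun r : Rule A =>
              if r.head = a then ((r.pos.inf J₂) && !(r.neg.sup J₂)) else false) hredmem
            simp only [rh, rp, rn] at h0
            rw [if_pos hhead] at h0
            exact h0
          rw [hpos2, hneg2]
          refine hle.trans ((hJ₂.1 a).trans ?_)
          exact le_of_eq (hJnC a haC).symm
        · rcases not_and_or.mp hsurv with hbad | hbad
          · push_neg at hbad
            obtain ⟨p, hp, hpC, hpv⟩ := hbad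
            have hpf : J₁ p = false := by
              cases hJp : J₁ p
              · rfl
              · exact absurd hJp hpv
            have hinf : r.pos.inf J = false := by
              have h1 : r.pos.inf J ≤ J p := Finset.inf_le hp
              rw [hJC p hpC, hpf] at h1
              exact le_bot_iff.mp h1
            rw [hinf, Bool.false_and]
            exact Bool.false_le _
          · push_neg at hbad
            obtain ⟨q, hq, hqC, hqv⟩ := hbad
            have hqt : J₁ q = true := by
              cases hJq : J₁ q
              · exact absurd hJq hqv
              · rfl
            have hsup : r.neg.sup J = true := by
              have h1 : J q ≤ r.neg.sup J := Finset.le_sup hq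
              rw [hJC q hqC, hqt] at h1
              exact top_le_iff.mp h1
            rw [hsup, Bool.not_true, Bool.and_false]
            exact Bool.false_le _
    · intro K hK a
      have hKC : ∀ b, PhiB QC J₁ K b ≤ K b := by
        intro b
        refine Finset.sup_le ?_
        intro r hrQC
        have hrmem := hrQC
        rw [hQCdef] at hrmem
        obtain ⟨hrQ, hrh⟩ := Finset.mem_filter.mp hrmem
        by_cases hhead : r.head = b
        · rw [if_pos hhead]
          obtain ⟨hposC, hnegC⟩ := hbodyC r hrQ hrh
          have hterm : r.neg.sup J₁ = r.neg.sup J :=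
            Finset.sup_congr rfl (fun q hq => (hJC q (hnegC q hq)).symm)
          rw [hterm]
          have hle := Finset.le_sup (s := Q) (f := fun r : Rule A =>
            if r.head = b then ((r.pos.inf K) && !(r.neg.sup J)) else false) hrQ
          simp only [if_pos hhead] at hle
          exact hle.trans (hK b)
        · rw [if_neg hhead]; exact Bool.false_le _
      have hJ₁K : ∀ b, J₁ b ≤ K b := hJ₁.2 K hKC
      have hKQ' : ∀ b, PhiB Q' J₂ K b ≤ K b := by
        intro b
        refine Finset.sup_le ?_
        intro r' hr'
        have hr'' := hr'
        rw [hQ'def] at hr''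
        obtain ⟨r, hrf, rfl⟩ := Finset.mem_image.mp hr''
        obtain ⟨hrQ, hrh, hsp, hsn⟩ := Finset.mem_filter.mp hrf
        simp only [rh, rp, rn]
        by_cases hhead : r.head = b
        · rw [if_pos hhead]
          have e2 : (r.pos.filter (· ∈ C)).inf K = true := by
            refine (Finset.inf_eq_top_iff _ _).mpr ?_
            intro p hp
            obtain ⟨hp1, hp2⟩ := Finset.mem_filter.mp hp
            have hK1 := hJ₁K p
            rw [hsp p hp1 hp2] at hK1
            exact top_le_iff.mp hK1
          have e4 : (r.neg.filter (· ∈ C)).sup J = false := by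
            refine (Finset.sup_eq_bot_iff _ _).mpr ?_
            intro q hq
            obtain ⟨hq1, hq2⟩ := Finset.mem_filter.mp hq
            rw [hJC q hq2]; exact hsn q hq1 hq2
          have e5 : (r.neg.filter (· ∉ C)).sup J₂ = (r.neg.filter (· ∉ C)).sup J :=
            Finset.sup_congr rfl (fun q hq => (hJnC q (Finset.mem_filter.mp hq).2).symm)
          have horig : ((r.pos.filter (· ∉ C)).inf K && !((r.neg.filter (· ∉ C)).sup J₂))
              = (r.pos.inf K && !(r.neg.sup J)) := by
            rw [inf_split C r.pos K, e2, Bool.true_and, sup_split C r.neg J, e4,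
              Bool.false_or, e5]
          rw [horig]
          have hle := Finset.le_sup (s := Q) (f := fun r : Rule A =>
            if r.head = b then ((r.pos.inf K) && !(r.neg.sup J)) else false) hrQ
          simp only [if_pos hhead] at hle
          exact hle.trans (hK b)
        · rw [if_neg hhead]
          exact Bool.false_le _
      have hJ₂K : ∀ b, J₂ b ≤ K b := hJ₂.2 K hKQ'
      by_cases haC : a ∈ C
      · rw [hJC a haC]; exact hJ₁K a
      · rw [hJnC a haC]; exact hJ₂K a

end Proof14

/-- if the dependency graph has no negative cycle, P has at least
one stable model. -/
theorem stmt14 {A : Type*} [Fintype A] [DecidableEq A] (P : Program A)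
    (h : NoNegCycle (dg P)) :
    ∃ J : A → Bool, IsStableModel P J := by
  classical
  exact buildStable P h (suppP P).card P le_rfl (fun u v s hd => hd)
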